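/- Let Ω be a Polish space containing a non-Borel subset E (e.g., Ω = ℝ), let μ be a Borel probability measure on Ω, and for x ∈ E let T_x = 1_{{x}} ⊗ μ be the weakly continuous rank-one operator ν ↦ ν({x})·μ. The family {T_x : x ∈ E} is order bounded by 1 ⊗ μ, but its supremum S in L(M(Ω)) is not weakly continuous: (Sδ_x)(Ω) = 0 for x ∉ E while (Sδ_x)(Ω) ≥ 1 for x ∈ E, so S*1 = 1_E is not Borel measurable. Hence the lattice of weakly continuous operators is not order complete. -/

import Mathlib

open MeasureTheory Topology Filter
open scoped NNReal ENNReal BoundedContinuousFunction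

noncomputable def sInt {Ω : Type*} [MeasurableSpace Ω] (μ : SignedMeasure Ω) (f : Ω → ℝ) : ℝ :=
  (∫ x, f x ∂μ.toJordanDecomposition.posPart) - ∫ x, f x ∂μ.toJordanDecomposition.negPart

def IsTransKernel {Ω : Type*} [MeasurableSpace Ω] (k : Ω → SignedMeasure Ω) : Prop :=
  ∀ A : Set Ω, MeasurableSet A → Measurable fun x => k x A

def IsBddKernel {Ω : Type*} [MeasurableSpace Ω] (k : Ω → SignedMeasure Ω) : Prop :=
  IsTransKernel k ∧ ∃ C : ℝ≥0, ∀ x, (k x).totalVariation Set.univ ≤ C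

def GivenByKernel {Ω : Type*} [MeasurableSpace Ω]
    (T : SignedMeasure Ω →ₗ[ℝ] SignedMeasure Ω) (k : Ω → SignedMeasure Ω) : Prop :=
  ∀ (μ : SignedMeasure Ω) (A : Set Ω), MeasurableSet A → T μ A = sInt μ (fun x => k x A)

def IsBdMeasurable {Ω : Type*} [MeasurableSpace Ω] (f : Ω → ℝ) : Prop :=
  Measurable f ∧ ∃ C : ℝ, ∀ x, |f x| ≤ C

instance totalVariation_isFiniteMeasure {Ω : Type*} [MeasurableSpace Ω] (μ : SignedMeasure Ω) :
    IsFiniteMeasure μ.totalVariation := by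
  unfold SignedMeasure.totalVariation; infer_instance

/- ## Auxiliary lemmas -/

lemma jd_of_measure {Ω : Type*} [MeasurableSpace Ω] (m : Measure Ω) [IsFiniteMeasure m] :
    m.toSignedMeasure.toJordanDecomposition =
      ⟨m, 0, Measure.MutuallySingular.zero_right⟩ := by
  apply SignedMeasure.toJordanDecomposition_eq
  rw [JordanDecomposition.toSignedMeasure]
  simp [Measure.toSignedMeasure_zero]

lemma sInt_of_measure {Ω : Type*} [MeasurableSpace Ω] (m : Measure Ω) [IsFiniteMeasure m]
    (f : Ω → ℝ) : sInt m.toSignedMeasure f = ∫ x, f x ∂m := by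
  rw [sInt, jd_of_measure]
  simp

lemma mono_nn {Ω : Type*} [MeasurableSpace Ω] {ν : SignedMeasure Ω} (hν : 0 ≤ ν)
    {A B : Set Ω} (hA : MeasurableSet A) (hB : MeasurableSet B) (hAB : A ⊆ B) :
    ν A ≤ ν B := by
  have h1 : ν B = ν A + ν (B \ A) := by
    rw [← VectorMeasure.of_union (Set.disjoint_sdiff_right) hA (hB.diff hA),
      Set.union_diff_cancel hAB]
  have h2 : 0 ≤ ν (B \ A) := by
    have := VectorMeasure.le_iff.mp hν (B \ A) (hB.diff hA)
    simpa using this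
  linarith

lemma tsm_nonneg {Ω : Type*} [MeasurableSpace Ω] (m : Measure Ω) [IsFiniteMeasure m] :
    0 ≤ m.toSignedMeasure := by
  rw [VectorMeasure.le_iff]
  intro i hi
  rw [Measure.toSignedMeasure_apply_measurable hi]
  simp [ENNReal.toReal_nonneg]

lemma signed_univ_eq {Ω : Type*} [MeasurableSpace Ω] (ν : SignedMeasure Ω) :
    ν Set.univ = (ν.toJordanDecomposition.posPart Set.univ).toReal
      - (ν.toJordanDecomposition.negPart Set.univ).toReal := by
  conv_lhs => rw [← ν.toSignedMeasure_toJordanDecomposition]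
  rw [JordanDecomposition.toSignedMeasure, VectorMeasure.sub_apply,
    Measure.toSignedMeasure_apply_measurable MeasurableSet.univ,
    Measure.toSignedMeasure_apply_measurable MeasurableSet.univ]
  rfl

lemma sInt_const {Ω : Type*} [MeasurableSpace Ω] (ν : SignedMeasure Ω) (c : ℝ) :
    sInt ν (fun _ => c) = ν Set.univ * c := by
  rw [sInt, integral_const, integral_const, signed_univ_eq, smul_eq_mul, smul_eq_mul]
  simp only [Measure.real]
  ring

/-- The rank-one operator `ν ↦ ν A • m.toSignedMeasure`. -/
noncomputable def evOp {Ω : Type*} [MeasurableSpace Ω] (m : Measure Ω) [IsFiniteMeasure m]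
    (A : Set Ω) : SignedMeasure Ω →ₗ[ℝ] SignedMeasure Ω where
  toFun ν := ν A • m.toSignedMeasure
  map_add' ν ν' := by simp only [VectorMeasure.add_apply, add_smul]
  map_smul' c ν := by
    simp only [VectorMeasure.smul_apply, RingHom.id_apply, smul_eq_mul, mul_smul]

@[simp] lemma evOp_apply {Ω : Type*} [MeasurableSpace Ω] (m : Measure Ω) [IsFiniteMeasure m]
    (A : Set Ω) (ν : SignedMeasure Ω) : evOp m A ν = ν A • m.toSignedMeasure := rfl

theorem stmt16 (E : Set ℝ) (hE : ¬ MeasurableSet E)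
    (μ : Measure ℝ) [IsProbabilityMeasure μ]
    (Tx : ℝ → SignedMeasure ℝ →ₗ[ℝ] SignedMeasure ℝ)
    (hTx : ∀ x : ℝ, ∀ ν : SignedMeasure ℝ, Tx x ν = ν {x} • μ.toSignedMeasure) :
    (∃ Bd : SignedMeasure ℝ →ₗ[ℝ] SignedMeasure ℝ,
      (∃ k : ℝ → SignedMeasure ℝ, IsBddKernel k ∧ GivenByKernel Bd k) ∧
      ∀ x ∈ E, ∀ ν : SignedMeasure ℝ, 0 ≤ ν → Tx x ν ≤ Bd ν) ∧
    ∀ S : SignedMeasure ℝ →ₗ[ℝ] SignedMeasure ℝ,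
      (∀ x ∈ E, ∀ ν : SignedMeasure ℝ, 0 ≤ ν → Tx x ν ≤ S ν) →
      (∀ R : SignedMeasure ℝ →ₗ[ℝ] SignedMeasure ℝ,
        (∀ x ∈ E, ∀ ν : SignedMeasure ℝ, 0 ≤ ν → Tx x ν ≤ R ν) →
        ∀ ν : SignedMeasure ℝ, 0 ≤ ν → S ν ≤ R ν) →
      (∀ x ∉ E, S (Measure.dirac x).toSignedMeasure Set.univ = 0) ∧
      (∀ x ∈ E, 1 ≤ S (Measure.dirac x).toSignedMeasure Set.univ) ∧
      ¬ ∃ k : ℝ → SignedMeasure ℝ, IsBddKernel k ∧ GivenByKernel S k := by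
  have hμuniv : μ.toSignedMeasure Set.univ = 1 := by
    rw [Measure.toSignedMeasure_apply_measurable MeasurableSet.univ]
    simp
  have hμA : ∀ A : Set ℝ, MeasurableSet A → 0 ≤ μ.toSignedMeasure A := by
    intro A hA
    have := VectorMeasure.le_iff.mp (tsm_nonneg μ) A hA
    simpa using this
  -- values of dirac signed measures on singletons and univ
  have hdsing : ∀ x y : ℝ, (Measure.dirac x).toSignedMeasure {y}
      = if x = y then 1 else 0 := by
    intro x y
    rw [Measure.toSignedMeasure_apply_measurable (measurableSet_singleton y)]
    by_cases h : x = y <;> simp [Measure.real, Measure.dirac_apply, Set.indicator, h]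
  have hduniv : ∀ x : ℝ, (Measure.dirac x).toSignedMeasure Set.univ = 1 := by
    intro x
    rw [Measure.toSignedMeasure_apply_measurable MeasurableSet.univ]
    simp
  -- E is nonempty
  have hEne : E.Nonempty := by
    rcases E.eq_empty_or_nonempty with h | h
    · exact absurd (h ▸ MeasurableSet.empty) hE
    · exact h
  constructor
  · -- the bound Bd = evOp μ univ
    refine ⟨evOp μ Set.univ, ⟨fun _ => μ.toSignedMeasure, ⟨?_, ?_⟩, ?_⟩, ?_⟩
    · intro A hA; exact measurable_const
    · refine ⟨1, fun x => ?_⟩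
      rw [SignedMeasure.totalVariation, jd_of_measure]
      simp
    · intro ν A hA
      rw [evOp_apply, VectorMeasure.smul_apply, smul_eq_mul, sInt_const]
    · intro x hx ν hν
      rw [hTx, VectorMeasure.le_iff]
      intro A hA
      rw [evOp_apply, VectorMeasure.smul_apply, VectorMeasure.smul_apply,
        smul_eq_mul, smul_eq_mul]
      exact mul_le_mul_of_nonneg_right
        (mono_nn hν (measurableSet_singleton x) MeasurableSet.univ (Set.subset_univ _))
        (hμA A hA)
  · intro S hub hlub
    -- part (b): 1 ≤ S δ_x univ for x ∈ E
    have hb : ∀ x ∈ E, 1 ≤ S (Measure.dirac x).toSignedMeasure Set.univ := by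
      intro x hx
      have h := VectorMeasure.le_iff.mp
        (hub x hx (Measure.dirac x).toSignedMeasure (tsm_nonneg _)) Set.univ
        MeasurableSet.univ
      rw [hTx, VectorMeasure.smul_apply, smul_eq_mul, hdsing, if_pos rfl, one_mul,
        hμuniv] at h
      exact h
    -- part (a): S δ_x univ = 0 for x ∉ E
    have ha : ∀ x ∉ E, S (Measure.dirac x).toSignedMeasure Set.univ = 0 := by
      intro x hx
      obtain ⟨x0, hx0⟩ := hEne
      have hx0x : x ≠ x0 := fun h => hx (h ▸ hx0)
      -- lower bound 0 ≤ S δ_x univ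
      have hlow : 0 ≤ S (Measure.dirac x).toSignedMeasure Set.univ := by
        have h := VectorMeasure.le_iff.mp
          (hub x0 hx0 (Measure.dirac x).toSignedMeasure (tsm_nonneg _)) Set.univ
          MeasurableSet.univ
        rw [hTx, VectorMeasure.smul_apply, smul_eq_mul, hdsing,
          if_neg hx0x, zero_mul] at h
        exact h
      -- upper bound via R = evOp μ univ - evOp μ {x}
      have hupR : ∀ y ∈ E, ∀ ν : SignedMeasure ℝ, 0 ≤ ν →
          Tx y ν ≤ (evOp μ Set.univ - evOp μ {x}) ν := by
        intro y hy ν hν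
        have hyx : y ≠ x := fun h => hx (h ▸ hy)
        rw [hTx, VectorMeasure.le_iff]
        intro A hA
        rw [LinearMap.sub_apply, VectorMeasure.sub_apply, evOp_apply, evOp_apply,
          VectorMeasure.smul_apply, VectorMeasure.smul_apply, VectorMeasure.smul_apply,
          smul_eq_mul, smul_eq_mul, smul_eq_mul, ← sub_mul]
        refine mul_le_mul_of_nonneg_right ?_ (hμA A hA)
        -- ν {y} ≤ ν univ - ν {x}
        have hsplit : ν Set.univ = ν {x} + ν ({x}ᶜ) := by
          rw [← VectorMeasure.of_union disjoint_compl_right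
            (measurableSet_singleton x) (measurableSet_singleton x).compl,
            Set.union_compl_self]
        have hmono : ν {y} ≤ ν ({x}ᶜ) :=
          mono_nn hν (measurableSet_singleton y) (measurableSet_singleton x).compl
            (Set.singleton_subset_iff.mpr (Set.mem_compl_singleton_iff.mpr hyx))
        linarith
      have h := VectorMeasure.le_iff.mp
        (hlub _ hupR (Measure.dirac x).toSignedMeasure (tsm_nonneg _)) Set.univ
        MeasurableSet.univ
      rw [LinearMap.sub_apply, VectorMeasure.sub_apply, evOp_apply, evOp_apply,
        VectorMeasure.smul_apply, VectorMeasure.smul_apply, smul_eq_mul, smul_eq_mul,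
        hduniv, hdsing, if_pos rfl] at h
      exact le_antisymm (by linarith) hlow
    refine ⟨ha, hb, ?_⟩
    -- part (c): no kernel representation
    rintro ⟨k, ⟨htk, -⟩, hgk⟩
    set f : ℝ → ℝ := fun y => k y Set.univ with hf
    have hfm : Measurable f := htk Set.univ MeasurableSet.univ
    have hfval : ∀ x : ℝ, S (Measure.dirac x).toSignedMeasure Set.univ = f x := by
      intro x
      rw [hgk (Measure.dirac x).toSignedMeasure Set.univ MeasurableSet.univ,
        sInt_of_measure, integral_dirac]
    apply hE
    have hEeq : E = {y : ℝ | 1 ≤ f y} := by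
      ext y
      constructor
      · intro hy
        have := hb y hy
        rw [hfval] at this
        exact this
      · intro hy
        by_contra hyE
        have := ha y hyE
        rw [hfval] at this
        rw [Set.mem_setOf_eq, this] at hy
        linarith
    rw [hEeq]
    exact measurableSet_le measurable_const hfm
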